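/- Let F, G, H be finite groups, U a subgroup of F × G, and V a subgroup of G × H. Then |U| · |V| = |p₂(U)·p₁(V)| · |Γ∩(U,V)| · |U * V|, where p₂(U)·p₁(V) denotes the product subset {g·g' : g ∈ p₂(U), g' ∈ p₁(V)} of G. -/
import Mathlib


open scoped Pointwise

section StarPrelude

variable {F G H I : Type*} [Group F] [Group G] [Group H] [Group I]
variable {A : Type*} [CommGroup A]

/-- The star product of subgroups `U ≤ F × G` and `V ≤ G × H`. -/
def starProd (U : Subgroup (F × G)) (V : Subgroup (G × H)) : Subgroup (F × H) where
  carrier := {p | ∃ g : G, (p.1, g) ∈ U ∧ (g, p.2) ∈ V}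
  one_mem' := ⟨1, U.one_mem, V.one_mem⟩
  mul_mem' := by
    rintro ⟨a, b⟩ ⟨c, d⟩ ⟨g, h1, h2⟩ ⟨g', h1', h2'⟩
    exact ⟨g * g', U.mul_mem h1 h1', V.mul_mem h2 h2'⟩
  inv_mem' := by
    rintro ⟨a, b⟩ ⟨g, h1, h2⟩
    exact ⟨g⁻¹, U.inv_mem h1, V.inv_mem h2⟩

infixl:70 " ⋆ " => starProd

theorem mem_starProd {U : Subgroup (F × G)} {V : Subgroup (G × H)} {p : F × H} :
    p ∈ U ⋆ V ↔ ∃ g : G, (p.1, g) ∈ U ∧ (g, p.2) ∈ V := Iff.rfl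

/-- `Γ(U,V) = {(f,g,h) : (f,g) ∈ U, (g,h) ∈ V}`. -/
def gammaSet (U : Subgroup (F × G)) (V : Subgroup (G × H)) : Set (F × G × H) :=
  {p | (p.1, p.2.1) ∈ U ∧ (p.2.1, p.2.2) ∈ V}

/-- `Γ∩(U,V) = {g ∈ G : (1,g) ∈ U and (g,1) ∈ V}`. -/
def gammaCap (U : Subgroup (F × G)) (V : Subgroup (G × H)) : Set G :=
  {g | ((1 : F), g) ∈ U ∧ (g, (1 : H)) ∈ V}

/-- `p₁(U)`, the image of `U ≤ F × G` in `F`. -/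
def proj1 (U : Subgroup (F × G)) : Subgroup F := U.map (MonoidHom.fst F G)

/-- `p₂(U)`, the image of `U ≤ F × G` in `G`. -/
def proj2 (U : Subgroup (F × G)) : Subgroup G := U.map (MonoidHom.snd F G)

/-- `k₁(U) = {f : (f,1) ∈ U}`. -/
def ker1 (U : Subgroup (F × G)) : Set F := {f | (f, (1 : G)) ∈ U}

/-- `k₂(U) = {g : (1,g) ∈ U}`. -/
def ker2 (U : Subgroup (F × G)) : Set G := {g | ((1 : F), g) ∈ U}

end StarPrelude


section Aux

variable {F G H : Type*} [Group F] [Group G] [Group H]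

def Wsub (U : Subgroup (F × G)) (V : Subgroup (G × H)) : Subgroup ((F × G) × (G × H)) where
  carrier := {p | p.1 ∈ U ∧ p.2 ∈ V ∧ p.1.2 = p.2.1}
  one_mem' := ⟨U.one_mem, V.one_mem, rfl⟩
  mul_mem' := by
    rintro ⟨a, b⟩ ⟨c, d⟩ ⟨ha, hb, he⟩ ⟨hc, hd, he'⟩
    refine ⟨U.mul_mem ha hc, V.mul_mem hb hd, ?_⟩
    simp only [Prod.snd_mul, Prod.fst_mul] at *
    rw [he, he']
  inv_mem' := by
    rintro ⟨a, b⟩ ⟨ha, hb, he⟩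
    refine ⟨U.inv_mem ha, V.inv_mem hb, ?_⟩
    simp only [Prod.fst_inv, Prod.snd_inv, inv_inj]
    exact he

theorem mem_Wsub {U : Subgroup (F × G)} {V : Subgroup (G × H)} {p : (F × G) × (G × H)} :
    p ∈ Wsub U V ↔ p.1 ∈ U ∧ p.2 ∈ V ∧ p.1.2 = p.2.1 := Iff.rfl

def phiW (U : Subgroup (F × G)) (V : Subgroup (G × H)) : Wsub U V →* F × H where
  toFun w := (w.1.1.1, w.1.2.2)
  map_one' := rfl
  map_mul' _ _ := rfl

theorem phiW_range (U : Subgroup (F × G)) (V : Subgroup (G × H)) :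
    (phiW U V).range = U ⋆ V := by
  ext ⟨f, h⟩
  constructor
  · rintro ⟨⟨⟨⟨f', g⟩, ⟨g', h'⟩⟩, hu, hv, he⟩, hfh⟩
    simp only [phiW, MonoidHom.coe_mk, OneHom.coe_mk, Prod.mk.injEq] at hfh
    obtain ⟨rfl, rfl⟩ := hfh
    simp only at he
    exact ⟨g, hu, by rwa [he]⟩
  · rintro ⟨g, h1, h2⟩
    exact ⟨⟨((f, g), (g, h)), h1, h2, rfl⟩, rfl⟩

theorem mem_ker_phiW {U : Subgroup (F × G)} {V : Subgroup (G × H)}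
    (w : (phiW U V).ker) : w.1.1.1.1 = 1 ∧ w.1.1.2.2 = 1 := by
  have hk := w.2
  rw [MonoidHom.mem_ker] at hk
  exact ⟨congrArg Prod.fst hk, congrArg Prod.snd hk⟩

noncomputable def kerEquivGammaCap (U : Subgroup (F × G)) (V : Subgroup (G × H)) :
    (phiW U V).ker ≃ gammaCap U V where
  toFun w := ⟨w.1.1.1.2, by
    obtain ⟨h1, h2⟩ := mem_ker_phiW w
    obtain ⟨hu, hv, he⟩ := w.1.2
    constructor
    · have : w.1.1.1 ∈ U := hu
      rwa [show w.1.1.1 = ((1 : F), w.1.1.1.2) from Prod.ext_iff.mpr ⟨h1, rfl⟩] at this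
    · have : w.1.1.2 ∈ V := hv
      rwa [show w.1.1.2 = (w.1.1.1.2, (1 : H)) from Prod.ext_iff.mpr ⟨he.symm, h2⟩] at this⟩
  invFun g := ⟨⟨((1, g.1), (g.1, 1)), g.2.1, g.2.2, rfl⟩, rfl⟩
  left_inv w := by
    obtain ⟨h1, h2⟩ := mem_ker_phiW w
    obtain ⟨hu, hv, he⟩ := w.1.2
    refine Subtype.ext (Subtype.ext ?_)
    refine Prod.ext_iff.mpr ⟨Prod.ext_iff.mpr ⟨?_, ?_⟩, Prod.ext_iff.mpr ⟨?_, ?_⟩⟩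
    exacts [h1.symm, rfl, he, h2.symm]
  right_inv g := rfl

end Aux

/-- For finite groups `F, G, H` and subgroups `U ≤ F × G`, `V ≤ G × H`:
`|U| · |V| = |p₂(U)·p₁(V)| · |Γ∩(U,V)| · |U * V|`. -/
theorem stmt1 {F G H : Type*} [Group F] [Group G] [Group H]
    [Finite F] [Finite G] [Finite H]
    (U : Subgroup (F × G)) (V : Subgroup (G × H)) :
    Nat.card U * Nat.card V =
      Nat.card ((proj2 U : Set G) * (proj1 V : Set G)) * Nat.card (gammaCap U V) *
        Nat.card (U ⋆ V) := by
  classical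
  set P : Set G := (proj2 U : Set G) * (proj1 V : Set G) with hP
  have hchoice : ∀ x : P, ∃ u : F × G, ∃ v : G × H,
      u ∈ U ∧ v ∈ V ∧ u.2 * v.1 = (x : G) := by
    rintro ⟨x, hx⟩
    rw [hP, Set.mem_mul] at hx
    obtain ⟨a, ha, b, hb, hab⟩ := hx
    rw [SetLike.mem_coe, proj2, Subgroup.mem_map] at ha
    rw [SetLike.mem_coe, proj1, Subgroup.mem_map] at hb
    obtain ⟨u, hu, hu2⟩ := ha
    obtain ⟨v, hv, hv1⟩ := hb
    exact ⟨u, v, hu, hv, by rw [show u.2 = a from hu2, show v.1 = b from hv1]; exact hab⟩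
  choose u₀ v₀ hu₀ hv₀ hx₀ using hchoice
  let f : (P × Wsub U V) → (U × V) := fun xw =>
    (⟨u₀ xw.1 * xw.2.1.1, U.mul_mem (hu₀ xw.1) (mem_Wsub.mp xw.2.2).1⟩,
     ⟨xw.2.1.2⁻¹ * v₀ xw.1, V.mul_mem (V.inv_mem (mem_Wsub.mp xw.2.2).2.1) (hv₀ xw.1)⟩)
  have hf : Function.Bijective f := by
    constructor
    · rintro ⟨x, w⟩ ⟨x', w'⟩ hfe
      obtain ⟨h1, h2⟩ := Prod.ext_iff.mp hfe
      have h1' : u₀ x * w.1.1 = u₀ x' * w'.1.1 := congrArg Subtype.val h1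
      have h2' : w.1.2⁻¹ * v₀ x = w'.1.2⁻¹ * v₀ x' := congrArg Subtype.val h2
      have hw := (mem_Wsub.mp w.2).2.2
      have hw' := (mem_Wsub.mp w'.2).2.2
      have e1 : ∀ (y : P) (z : Wsub U V), z.1.1.2 = z.1.2.1 →
          (u₀ y * z.1.1).2 * (z.1.2⁻¹ * v₀ y).1 = (y : G) := by
        intro y z hz
        simp only [Prod.snd_mul, Prod.fst_mul, Prod.fst_inv]
        rw [hz, mul_assoc, mul_inv_cancel_left]
        exact hx₀ y
      have hxx : x = x' := by
        refine Subtype.ext ?_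
        rw [← e1 x w hw, ← e1 x' w' hw', h1', h2']
      subst hxx
      have hww1 : w.1.1 = w'.1.1 := mul_left_cancel h1'
      have hww2 : w.1.2 = w'.1.2 := inv_injective (mul_right_cancel h2')
      exact Prod.ext_iff.mpr ⟨rfl, Subtype.ext (Prod.ext_iff.mpr ⟨hww1, hww2⟩)⟩
    · rintro ⟨u, v⟩
      have hxmem : (u : F × G).2 * (v : G × H).1 ∈ P := by
        rw [hP]
        refine Set.mul_mem_mul ?_ ?_
        · rw [SetLike.mem_coe, proj2, Subgroup.mem_map]
          exact ⟨u.1, u.2, rfl⟩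
        · rw [SetLike.mem_coe, proj1, Subgroup.mem_map]
          exact ⟨v.1, v.2, rfl⟩
      set x : P := ⟨(u : F × G).2 * (v : G × H).1, hxmem⟩ with hxdef
      have hmemW : ((u₀ x)⁻¹ * u.1, v₀ x * (v : G × H)⁻¹) ∈ Wsub U V := by
        refine mem_Wsub.mpr ⟨U.mul_mem (U.inv_mem (hu₀ x)) u.2,
          V.mul_mem (hv₀ x) (V.inv_mem v.2), ?_⟩
        simp only [Prod.snd_mul, Prod.fst_mul, Prod.snd_inv, Prod.fst_inv]
        rw [inv_mul_eq_iff_eq_mul, ← mul_assoc, hx₀ x, mul_inv_cancel_right]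
      refine ⟨⟨x, ⟨((u₀ x)⁻¹ * u.1, v₀ x * (v : G × H)⁻¹), hmemW⟩⟩, ?_⟩
      refine Prod.ext_iff.mpr ⟨Subtype.ext ?_, Subtype.ext ?_⟩
      · exact mul_inv_cancel_left _ _
      · show (v₀ x * (v : G × H)⁻¹)⁻¹ * v₀ x = (v : G × H)
        group
  have hcardW : Nat.card (Wsub U V) =
      Nat.card (gammaCap U V) * Nat.card (U ⋆ V) := by
    have h1 := Subgroup.card_eq_card_quotient_mul_card_subgroup (phiW U V).ker
    have h2 : Nat.card ((Wsub U V) ⧸ (phiW U V).ker) = Nat.card (U ⋆ V) := by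
      rw [Nat.card_congr (QuotientGroup.quotientKerEquivRange (phiW U V)).toEquiv,
        phiW_range]
    have h3 : Nat.card ((phiW U V).ker) = Nat.card (gammaCap U V) :=
      Nat.card_congr (kerEquivGammaCap U V)
    rw [h1, h2, h3, mul_comm]
  calc Nat.card U * Nat.card V = Nat.card (U × V) := (Nat.card_prod _ _).symm
    _ = Nat.card (P × Wsub U V) := (Nat.card_congr (Equiv.ofBijective f hf)).symm
    _ = Nat.card P * Nat.card (Wsub U V) := Nat.card_prod _ _
    _ = Nat.card P * (Nat.card (gammaCap U V) * Nat.card (U ⋆ V)) := by rw [hcardW]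
    _ = Nat.card P * Nat.card (gammaCap U V) * Nat.card (U ⋆ V) := by ring
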